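/- Let A be a bounded positive definite self-adjoint operator and B a bounded positive semidefinite self-adjoint operator on a Hilbert space H, and suppose the operator B^{1/2}A^{-1/2} has closed range with ‖(B^{1/2}A^{-1/2})†‖ = k < ∞. Let H_κ = A + κ²B and let H_∞† = s-lim_{κ→∞} H_κ⁻¹. Then for every f in the closure of N(B) one has the upper bound (f, H_κ⁻¹f) − (f, H_∞†f) ≤ k²((f, A⁻¹f) − (f, H_∞†f))/κ². -/

import Mathlib

local notation "⟪" x ", " y "⟫" => @inner ℝ _ _ x y

set_option maxHeartbeats 1000000 in
/-- Upper estimate of Theorem 4.3: if `C = B^{1/2}A^{-1/2}` has closed range with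
`‖C†‖ = k`, then for `f` in the closure of `N(B)` and `κ > 0`,
`(f, H_κ⁻¹f) − (f, H_∞†f) ≤ k²((f, A⁻¹f) − (f, H_∞†f))/κ²`, where `H_κ = A + κ²B` and
`H_∞† = s-lim H_κ⁻¹`. -/
theorem regular_large_coupling_upper_estimate
    {H : Type*} [NormedAddCommGroup H] [InnerProductSpace ℝ H] [CompleteSpace H]
    (A B S Ah Ainvh Ainv : H →L[ℝ] H)
    (hA : IsSelfAdjoint A) (hB : IsSelfAdjoint B)
    (hApos : ∃ c > (0:ℝ), ∀ u : H, c * ‖u‖ ^ 2 ≤ ⟪u, A u⟫)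
    (hBpos : ∀ u : H, 0 ≤ ⟪u, B u⟫)
    -- `S = B^{1/2}` and `Ah = A^{1/2}`, `Ainvh = A^{-1/2}`, `Ainv = A⁻¹`
    (hS : IsSelfAdjoint S) (hSpos : ∀ u : H, 0 ≤ ⟪u, S u⟫) (hSsq : S ∘L S = B)
    (hAh : IsSelfAdjoint Ah) (hAhpos : ∀ u : H, 0 ≤ ⟪u, Ah u⟫) (hAhsq : Ah ∘L Ah = A)
    (hAinvh_l : Ah ∘L Ainvh = 1) (hAinvh_r : Ainvh ∘L Ah = 1)
    (hAinv_l : A ∘L Ainv = 1) (hAinv_r : Ainv ∘L A = 1)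
    -- `C = B^{1/2}A^{-1/2}` has closed range and Moore–Penrose pseudoinverse of norm `k`
    (k : ℝ) (Cdag : H →L[ℝ] H)
    (hCrange : IsClosed (LinearMap.range ((S ∘L Ainvh : H →L[ℝ] H) : H →ₗ[ℝ] H) : Set H))
    (hMP1 : (S ∘L Ainvh) ∘L Cdag ∘L (S ∘L Ainvh) = S ∘L Ainvh)
    (hMP2 : Cdag ∘L (S ∘L Ainvh) ∘L Cdag = Cdag)
    (hMP3 : IsSelfAdjoint ((S ∘L Ainvh) ∘L Cdag))
    (hMP4 : IsSelfAdjoint (Cdag ∘L (S ∘L Ainvh)))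
    (hk : ‖Cdag‖ = k)
    -- the resolvent family `R κ = H_κ⁻¹` and its strong limit `G = H_∞†`
    (R : ℝ → (H →L[ℝ] H))
    (hRl : ∀ κ : ℝ, (A + κ ^ 2 • B) ∘L R κ = 1)
    (hRr : ∀ κ : ℝ, R κ ∘L (A + κ ^ 2 • B) = 1)
    (G : H →L[ℝ] H)
    (hG : ∀ f : H, Filter.Tendsto (fun κ => R κ f) Filter.atTop (nhds (G f))) :
    ∀ f ∈ closure ((LinearMap.ker (B : H →ₗ[ℝ] H) : Submodule ℝ H) : Set H), ∀ κ : ℝ, 0 < κ →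
      ⟪f, R κ f⟫ - ⟪f, G f⟫ ≤ k ^ 2 * (⟪f, Ainv f⟫ - ⟪f, G f⟫) / κ ^ 2 := by
  intro f _ κ hκ
  -- pointwise versions of the operator identities
  have ahinv : ∀ u, Ah (Ainvh u) = u := fun u => by
    have := ContinuousLinearMap.ext_iff.mp hAinvh_l u; simpa using this
  have invah : ∀ u, Ainvh (Ah u) = u := fun u => by
    have := ContinuousLinearMap.ext_iff.mp hAinvh_r u; simpa using this
  have hAsq' : ∀ u, Ah (Ah u) = A u := fun u => by
    have := ContinuousLinearMap.ext_iff.mp hAhsq u; simpa using this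
  have hBsq' : ∀ u, S (S u) = B u := fun u => by
    have := ContinuousLinearMap.ext_iff.mp hSsq u; simpa using this
  have hAinvl' : ∀ u, A (Ainv u) = u := fun u => by
    have := ContinuousLinearMap.ext_iff.mp hAinv_l u; simpa using this
  have hRl' : ∀ (κ' : ℝ) u, A (R κ' u) + κ' ^ 2 • B (R κ' u) = u := fun κ' u => by
    have := ContinuousLinearMap.ext_iff.mp (hRl κ') u; simpa using this
  have hRr' : ∀ (κ' : ℝ) u, R κ' (A u + κ' ^ 2 • B u) = u := fun κ' u => by
    have := ContinuousLinearMap.ext_iff.mp (hRr κ') u; simpa using this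
  have hMP1' : ∀ u, S (Ainvh (Cdag (S (Ainvh u)))) = S (Ainvh u) := fun u => by
    have := ContinuousLinearMap.ext_iff.mp hMP1 u; simpa using this
  -- symmetry of the various operators
  have symA : ∀ u v : H, ⟪A u, v⟫ = ⟪u, A v⟫ := fun u v => hA.isSymmetric u v
  have symB : ∀ u v : H, ⟪B u, v⟫ = ⟪u, B v⟫ := fun u v => hB.isSymmetric u v
  have symS : ∀ u v : H, ⟪S u, v⟫ = ⟪u, S v⟫ := fun u v => hS.isSymmetric u v
  have symAh : ∀ u v : H, ⟪Ah u, v⟫ = ⟪u, Ah v⟫ := fun u v => hAh.isSymmetric u v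
  have symP : ∀ u v : H, ⟪Cdag (S (Ainvh u)), v⟫ = ⟪u, Cdag (S (Ainvh v))⟫ := fun u v => by
    have := hMP4.isSymmetric u v; simpa using this
  have symAinvh : ∀ u v : H, ⟪Ainvh u, v⟫ = ⟪u, Ainvh v⟫ := fun u v => by
    calc ⟪Ainvh u, v⟫ = ⟪Ainvh u, Ah (Ainvh v)⟫ := by rw [ahinv]
      _ = ⟪Ah (Ainvh u), Ainvh v⟫ := (symAh _ _).symm
      _ = ⟪u, Ainvh v⟫ := by rw [ahinv]
  have symR : ∀ (κ' : ℝ) (u v : H), ⟪R κ' u, v⟫ = ⟪u, R κ' v⟫ := fun κ' u v => by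
    calc ⟪R κ' u, v⟫ = ⟪R κ' u, A (R κ' v) + κ' ^ 2 • B (R κ' v)⟫ := by rw [hRl']
      _ = ⟪A (R κ' u) + κ' ^ 2 • B (R κ' u), R κ' v⟫ := by
          rw [inner_add_right, inner_add_left, real_inner_smul_right, real_inner_smul_left,
            symA, ← symB]
      _ = ⟪u, R κ' v⟫ := by rw [hRl']
  have symG : ∀ u v : H, ⟪G u, v⟫ = ⟪u, G v⟫ := fun u v =>
    tendsto_nhds_unique ((hG u).inner tendsto_const_nhds)
      ((tendsto_const_nhds.inner (hG v)).congr fun κ' => (symR κ' u v).symm)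
  -- the key limit fact : B ∘ G = 0
  have limRB : ∀ v : H, Filter.Tendsto (fun κ' => R κ' (B v)) Filter.atTop (nhds 0) := by
    intro v
    have key : ∀ κ' : ℝ, κ' ≠ 0 → R κ' (B v) = (κ' ^ 2)⁻¹ • (v - R κ' (A v)) := by
      intro κ' hne
      have h1 : R κ' (A v) + κ' ^ 2 • R κ' (B v) = v := by
        have := hRr' κ' v; rwa [map_add, map_smul] at this
      have h2 : κ' ^ 2 • R κ' (B v) = v - R κ' (A v) := eq_sub_of_add_eq' h1
      calc R κ' (B v) = (κ' ^ 2)⁻¹ • (κ' ^ 2 • R κ' (B v)) :=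
            (inv_smul_smul₀ (pow_ne_zero 2 hne) _).symm
        _ = (κ' ^ 2)⁻¹ • (v - R κ' (A v)) := by rw [h2]
    have t0 : Filter.Tendsto (fun κ' : ℝ => (κ' ^ 2)⁻¹) Filter.atTop (nhds 0) :=
      (Filter.tendsto_pow_atTop two_ne_zero).inv_tendsto_atTop
    have t1 : Filter.Tendsto (fun κ' => v - R κ' (A v)) Filter.atTop (nhds (v - G (A v))) :=
      tendsto_const_nhds.sub (hG (A v))
    have t2 := t0.smul t1
    rw [zero_smul] at t2
    refine t2.congr' ?_
    filter_upwards [Filter.eventually_ge_atTop (1 : ℝ)] with x hx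
    exact (key x (by linarith)).symm
  have BG : ∀ u : H, B (G u) = 0 := by
    intro u
    have inner0 : ∀ v : H, ⟪G u, B v⟫ = 0 := fun v =>
      tendsto_nhds_unique ((hG u).inner tendsto_const_nhds)
        (by
          have : Filter.Tendsto (fun κ' : ℝ => ⟪u, R κ' (B v)⟫) Filter.atTop
              (nhds ⟪u, (0 : H)⟫) := tendsto_const_nhds.inner (limRB v)
          rw [inner_zero_right] at this
          exact this.congr fun κ' => (symR κ' u (B v)).symm)
    have : ⟪B (G u), B (G u)⟫ = 0 := by
      rw [symB]; exact inner0 (B (G u))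
    exact inner_self_eq_zero.mp this
  -- vectors with B-kernel image are fixed by the resolvents and by G
  have kerfix : ∀ u : H, B u = 0 → ∀ κ' : ℝ, R κ' (A u) = u := by
    intro u hu κ'
    have := hRr' κ' u
    rwa [hu, smul_zero, add_zero] at this
  have Gfix : ∀ u : H, B u = 0 → G (A u) = u := fun u hu =>
    tendsto_nhds_unique (hG (A u))
      (tendsto_const_nhds.congr fun κ' => (kerfix u hu κ').symm)
  -- the transformed vectors
  set g : H := Ainvh f with hgdef
  set p : H := Ah (G f) with hpdef
  set g1 : H := g - p with hg1def
  set r : H := R κ (Ah g1) with hrdef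
  set h : H := Ah r with hhdef
  have e1 : Ah g = f := ahinv f
  have hBGf : B (G f) = 0 := BG f
  -- `Gh u := Ah (G (Ah u))` is symmetric
  have symGh : ∀ u v : H, ⟪Ah (G (Ah u)), v⟫ = ⟪u, Ah (G (Ah v))⟫ := fun u v => by
    rw [symAh, symG, symAh]
  -- Gh g = p  and  Gh p = p
  have hAp : Ah p = A (G f) := hAsq' (G f)
  have Ghg : Ah (G (Ah g)) = p := by rw [e1]
  have Ghp : Ah (G (Ah p)) = p := by rw [hAp, Gfix (G f) hBGf]
  have Ghg1 : Ah (G (Ah g1)) = 0 := by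
    rw [hg1def, map_sub, map_sub, map_sub, Ghg, Ghp, sub_self]
  -- resolvents fix vectors of the form Ah (G z)
  have Qfix : ∀ (κ' : ℝ) (z : H), Ah (R κ' (Ah (Ah (G (Ah z))))) = Ah (G (Ah z)) := by
    intro κ' z
    rw [hAsq' (G (Ah z)), kerfix (G (Ah z)) (BG (Ah z)) κ']
  -- Q is symmetric
  have symQ : ∀ (κ' : ℝ) (u v : H), ⟪Ah (R κ' (Ah u)), v⟫ = ⟪u, Ah (R κ' (Ah v))⟫ :=
    fun κ' u v => by rw [symAh, symR, symAh]
  -- Gh h = 0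
  have Ghh : Ah (G (Ah h)) = 0 := by
    have key : ∀ w : H, ⟪Ah (G (Ah h)), w⟫ = 0 := by
      intro w
      calc ⟪Ah (G (Ah h)), w⟫ = ⟪h, Ah (G (Ah w))⟫ := symGh h w
        _ = ⟪Ah (R κ (Ah g1)), Ah (G (Ah w))⟫ := by rw [hhdef, hrdef]
        _ = ⟪g1, Ah (R κ (Ah (Ah (G (Ah w)))))⟫ := symQ κ g1 _
        _ = ⟪g1, Ah (G (Ah w))⟫ := by rw [Qfix]
        _ = ⟪Ah (G (Ah g1)), w⟫ := (symGh g1 w).symm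
        _ = 0 := by rw [Ghg1, inner_zero_left]
    have := key (Ah (G (Ah h)))
    exact inner_self_eq_zero.mp this
  -- h is fixed by the projection Cdag ∘ C
  have hfix : h = Cdag (S (Ainvh h)) := by
    set w : H := h - Cdag (S (Ainvh h)) with hwdef
    have hCw : S (Ainvh w) = 0 := by
      rw [hwdef, map_sub, map_sub, hMP1', sub_self]
    have hBw : B (Ainvh w) = 0 := by
      rw [← hBsq', hCw, map_zero]
    have hGhw : Ah (G (Ah w)) = w := by
      have h1 : A (Ainvh w) = Ah w := by rw [← hAsq' (Ainvh w), ahinv]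
      have h2 : G (Ah w) = Ainvh w := by rw [← h1, Gfix (Ainvh w) hBw]
      rw [h2, ahinv]
    have hhw : ⟪h, w⟫ = 0 := by
      conv_lhs => rw [← hGhw]
      rw [← symGh, Ghh, inner_zero_left]
    have hPhw : ⟪Cdag (S (Ainvh h)), w⟫ = 0 := by
      rw [symP, hCw, map_zero, inner_zero_right]
    have hw0 : ⟪w, w⟫ = 0 := by
      conv_lhs => rw [hwdef]
      rw [inner_sub_left, hhw, hPhw, sub_zero]
    have hw0' : w = 0 := inner_self_eq_zero.mp hw0
    rw [hwdef] at hw0'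
    exact sub_eq_zero.mp hw0'
    -- norm bound from the pseudoinverse
  have hSr : S (Ainvh h) = S r := by rw [hhdef, invah]
  have hnorm : ‖h‖ ≤ k * ‖S r‖ := by
    calc ‖h‖ = ‖Cdag (S r)‖ := by rw [hfix, hSr]
      _ ≤ ‖Cdag‖ * ‖S r‖ := Cdag.le_opNorm _
      _ = k * ‖S r‖ := by rw [hk]
  -- the key inner-product identity
  have hAg1 : Ah g1 = A r + κ ^ 2 • B r := by
    rw [hrdef]; exact (hRl' κ (Ah g1)).symm
  have hkey : ⟪g1, h⟫ = ‖h‖ ^ 2 + κ ^ 2 * ‖S r‖ ^ 2 := by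
    have step1 : ⟪g1, h⟫ = ⟪Ah g1, r⟫ := by rw [hhdef]; exact (symAh g1 r).symm
    rw [step1, hAg1, inner_add_left, real_inner_smul_left, ← hAsq' r, symAh,
      ← hBsq' r, symS, real_inner_self_eq_norm_sq, real_inner_self_eq_norm_sq, ← hhdef]
  -- p is orthogonal to h
  have hph : ⟪p, h⟫ = 0 := by
    conv_lhs => rw [← Ghp]
    rw [symGh, Ghh, inner_zero_right]
  -- the quadratic forms in terms of the transformed vectors
  have Qp : Ah (R κ (Ah p)) = p := by
    rw [hAp, kerfix (G f) hBGf κ]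
  have fGf : ⟪f, G f⟫ = ⟪g, p⟫ := by
    calc ⟪f, G f⟫ = ⟪Ah g, G (Ah g)⟫ := by rw [e1]
      _ = ⟪g, Ah (G (Ah g))⟫ := symAh g _
      _ = ⟪g, p⟫ := by rw [Ghg]
  have fRf : ⟪f, R κ f⟫ = ⟪g1, h⟫ + ⟪g, p⟫ := by
    have hsplit : Ah (R κ (Ah g)) = h + p := by
      have hAg : Ah g = Ah g1 + Ah p := by rw [hg1def, map_sub]; abel
      rw [hAg, map_add, map_add, Qp, ← hrdef, ← hhdef]
    have ggh : ⟪g, h⟫ = ⟪g1, h⟫ := by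
      have e : ⟪g, h⟫ = ⟪g1, h⟫ + ⟪p, h⟫ := by
        rw [hg1def, inner_sub_left]; ring
      rw [e, hph, add_zero]
    calc ⟪f, R κ f⟫ = ⟪Ah g, R κ (Ah g)⟫ := by rw [e1]
      _ = ⟪g, Ah (R κ (Ah g))⟫ := symAh g _
      _ = ⟪g, h + p⟫ := by rw [hsplit]
      _ = ⟪g, h⟫ + ⟪g, p⟫ := inner_add_right g h p
      _ = ⟪g1, h⟫ + ⟪g, p⟫ := by rw [ggh]
  have fAinvf : ⟪f, Ainv f⟫ = ⟪g, g⟫ := by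
    have ainv2 : Ainvh (Ainvh f) = Ainv f := by
      conv_lhs => rw [← hAinvl' f]
      rw [← hAsq' (Ainv f), invah, invah]
    calc ⟪f, Ainv f⟫ = ⟪f, Ainvh (Ainvh f)⟫ := by rw [ainv2]
      _ = ⟪Ainvh f, Ainvh f⟫ := (symAinvh f (Ainvh f)).symm
      _ = ⟪g, g⟫ := by rw [← hgdef]
  have gp : ⟪g, p⟫ = ⟪p, p⟫ := by
    conv_lhs => rw [← Ghp]
    rw [← symGh, Ghg]
  have hg1norm : ‖g1‖ ^ 2 = ⟪f, Ainv f⟫ - ⟪f, G f⟫ := by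
    rw [fAinvf, fGf]
    have e : ‖g1‖ ^ 2 = ⟪g1, g1⟫ := (real_inner_self_eq_norm_sq g1).symm
    rw [e, hg1def, inner_sub_left, inner_sub_right, inner_sub_right]
    linarith [gp, real_inner_comm p g]
  have lhs_eq : ⟪f, R κ f⟫ - ⟪f, G f⟫ = ⟪g1, h⟫ := by
    rw [fRf, fGf]; ring
  rw [lhs_eq, ← hg1norm]
  -- final numeric estimate
  have hκ2 : (0:ℝ) < κ ^ 2 := by positivity
  have c2 : ⟪g1, h⟫ ≤ ‖g1‖ * ‖h‖ := real_inner_le_norm g1 h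
  by_cases hh : h = 0
  · rw [hh, inner_zero_right]; positivity
  · have hhpos : 0 < ‖h‖ := norm_pos_iff.mpr hh
    have d1 : ‖h‖ ^ 2 ≤ k ^ 2 * ‖S r‖ ^ 2 := by
      nlinarith [hnorm, norm_nonneg h, norm_nonneg (S r)]
    have d2 : κ ^ 2 * ‖h‖ ^ 2 ≤ κ ^ 2 * (k ^ 2 * ‖S r‖ ^ 2) :=
      mul_le_mul_of_nonneg_left d1 hκ2.le
    have d3 : (0:ℝ) ≤ k ^ 2 * ‖h‖ ^ 2 := by positivity
    have c1 : κ ^ 2 * ‖h‖ ^ 2 ≤ k ^ 2 * ⟪g1, h⟫ := by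
      rw [hkey]; nlinarith [d2, d3]
    have c2' : k ^ 2 * ⟪g1, h⟫ ≤ k ^ 2 * (‖g1‖ * ‖h‖) :=
      mul_le_mul_of_nonneg_left c2 (sq_nonneg k)
    have c4 : κ ^ 2 * ‖h‖ ≤ k ^ 2 * ‖g1‖ := by
      have h5 : κ ^ 2 * ‖h‖ * ‖h‖ ≤ k ^ 2 * ‖g1‖ * ‖h‖ := by nlinarith [c1, c2']
      exact le_of_mul_le_mul_right h5 hhpos
    calc ⟪g1, h⟫ ≤ ‖g1‖ * ‖h‖ := c2
      _ ≤ ‖g1‖ * (k ^ 2 * ‖g1‖ / κ ^ 2) := by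
          refine mul_le_mul_of_nonneg_left ?_ (norm_nonneg g1)
          rw [le_div_iff₀ hκ2]
          nlinarith [c4]
      _ = k ^ 2 * ‖g1‖ ^ 2 / κ ^ 2 := by ring
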